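/- Let G be an r-regular finite simple graph with n vertices and m edges. Then NK(G^{+-+}) = 2^n · r^n · (m+3-2r)^m. -/

import Mathlib

open Finset

variable {V : Type*}

/-- The Narumi–Katayama index: the product of the degrees of all vertices. -/
def NK {W : Type*} [Fintype W] (H : SimpleGraph W) [DecidableRel H.Adj] : ℕ :=
  ∏ v, H.degree v

/-- The first Zagreb index: the sum of the squares of the degrees. -/
def M1 [Fintype V] (G : SimpleGraph V) [DecidableRel G.Adj] : ℕ :=
  ∑ v, (G.degree v) ^ 2

/-- The multiplicative sum Zagreb index: the product over the edges of `G` of the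
sum of the degrees of the two endpoints. -/
def Pi1Star [Fintype V] [DecidableEq V] (G : SimpleGraph V) [DecidableRel G.Adj] : ℕ :=
  ∏ e ∈ G.edgeFinset,
    Sym2.lift ⟨fun u v => G.degree u + G.degree v, fun u v => by simp [Nat.add_comm]⟩ e

/-- A generic transformation graph on the vertex set `V(G) ∪ E(G)`, built from a
symmetric irreflexive relation `Rvv` between vertices, a symmetric irreflexive relation
`Ree` between edges, and an incidence relation `Rve` between vertices and edges. -/
def transGraph (G : SimpleGraph V) (Rvv : V → V → Prop) (Ree : Sym2 V → Sym2 V → Prop)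
    (Rve : V → Sym2 V → Prop)
    (hvv : Symmetric Rvv) (hvv' : Irreflexive Rvv)
    (hee : Symmetric Ree) (hee' : Irreflexive Ree) :
    SimpleGraph (V ⊕ G.edgeSet) where
  Adj a b :=
    match a, b with
    | Sum.inl u, Sum.inl v => Rvv u v
    | Sum.inr e, Sum.inr f => Ree e.1 f.1
    | Sum.inl u, Sum.inr e => Rve u e.1
    | Sum.inr e, Sum.inl u => Rve u e.1
  symm := ⟨by
    rintro (u | e) (v | f) h
    · exact hvv h
    · exact h
    · exact h
    · exact hee h⟩
  loopless := ⟨by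
    rintro (u | e) h
    · exact hvv' u h
    · exact hee' e.1 h⟩

instance transGraph.instDecidableAdj (G : SimpleGraph V) (Rvv : V → V → Prop)
    (Ree : Sym2 V → Sym2 V → Prop) (Rve : V → Sym2 V → Prop)
    (h1 : Symmetric Rvv) (h2 : Irreflexive Rvv) (h3 : Symmetric Ree) (h4 : Irreflexive Ree)
    [DecidableRel Rvv] [DecidableRel Ree] [∀ u e, Decidable (Rve u e)] :
    DecidableRel (transGraph G Rvv Ree Rve h1 h2 h3 h4).Adj := fun a b =>
  match a, b with
  | Sum.inl u, Sum.inl v => inferInstanceAs (Decidable (Rvv u v))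
  | Sum.inr e, Sum.inr f => inferInstanceAs (Decidable (Ree e.1 f.1))
  | Sum.inl u, Sum.inr e => inferInstanceAs (Decidable (Rve u e.1))
  | Sum.inr e, Sum.inl u => inferInstanceAs (Decidable (Rve u e.1))

/-- Two edges (as elements of `Sym2 V`) are adjacent: distinct and sharing an endpoint. -/
abbrev shareRel : Sym2 V → Sym2 V → Prop := fun e f => e ≠ f ∧ ∃ w, w ∈ e ∧ w ∈ f

lemma shareRel_symm : Symmetric (shareRel (V := V)) :=
  fun _ _ h => ⟨h.1.symm, h.2.imp fun _ hw => ⟨hw.2, hw.1⟩⟩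

lemma shareRel_irrefl : Irreflexive (shareRel (V := V)) := fun _ h => h.1 rfl

/-- Two edges are "non-adjacent": distinct and sharing no endpoint. -/
abbrev coshareRel : Sym2 V → Sym2 V → Prop := fun e f => e ≠ f ∧ ∀ w, w ∈ e → w ∉ f

lemma coshareRel_symm : Symmetric (coshareRel (V := V)) :=
  fun _ _ h => ⟨h.1.symm, fun w hf he => h.2 w he hf⟩

lemma coshareRel_irrefl : Irreflexive (coshareRel (V := V)) := fun _ h => h.1 rfl

/-- Non-adjacency of distinct vertices. -/
abbrev coAdj (G : SimpleGraph V) : V → V → Prop := fun u v => u ≠ v ∧ ¬ G.Adj u v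

lemma coAdj_symm (G : SimpleGraph V) : Symmetric (coAdj G) :=
  fun _ _ h => ⟨h.1.symm, fun ha => h.2 ha.symm⟩

lemma coAdj_irrefl (G : SimpleGraph V) : Irreflexive (coAdj G) := fun _ h => h.1 rfl

variable [Fintype V] [DecidableEq V]

/-- The total transformation graph `G^{+-+}`. -/
abbrev Gpmp (G : SimpleGraph V) [DecidableRel G.Adj] : SimpleGraph (V ⊕ G.edgeSet) :=
  transGraph G G.Adj coshareRel (fun u e => u ∈ e)
    (fun _ _ h => h.symm) (fun _ h => G.ne_of_adj h rfl) coshareRel_symm coshareRel_irrefl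

instance Gpmp.instDecidableAdj (G : SimpleGraph V) [DecidableRel G.Adj] :
    DecidableRel (Gpmp G).Adj :=
  transGraph.instDecidableAdj G G.Adj coshareRel (fun u e => u ∈ e)
    (fun _ _ h => h.symm) (fun _ h => G.ne_of_adj h rfl) coshareRel_symm coshareRel_irrefl

theorem stmt_17 (G : SimpleGraph V) [DecidableRel G.Adj]
    (r : ℕ)
    (hreg : G.IsRegularOfDegree r) :
    NK (Gpmp G) = 2 ^ Fintype.card V * r ^ Fintype.card V * (G.edgeFinset.card + 3 - 2 * r) ^ G.edgeFinset.card := by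
  classical
  have hsplit : ∀ x : V ⊕ G.edgeSet, (Gpmp G).degree x =
      Fintype.card {v : V // (Gpmp G).Adj x (Sum.inl v)} +
      Fintype.card {e : G.edgeSet // (Gpmp G).Adj x (Sum.inr e)} := by
    intro x
    rw [← SimpleGraph.card_neighborSet_eq_degree, ← Fintype.card_sum]
    exact Fintype.card_congr Equiv.subtypeSum
  have hdegv : ∀ u : V, (Gpmp G).degree (Sum.inl u) = 2 * r := by
    intro u
    rw [hsplit]
    have h1 : Fintype.card {v : V // G.Adj u v} = r := by
      rw [← hreg u, ← SimpleGraph.card_neighborSet_eq_degree]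
      exact Fintype.card_congr (Equiv.refl _)
    have h2 : Fintype.card {e : G.edgeSet // u ∈ e.1} = r := by
      rw [← hreg u, ← SimpleGraph.card_incidenceSet_eq_degree]
      exact Fintype.card_congr (Equiv.subtypeSubtypeEquivSubtypeInter (· ∈ G.edgeSet) (u ∈ ·))
    show Fintype.card {v : V // G.Adj u v} + Fintype.card {e : G.edgeSet // u ∈ e.1} = 2 * r
    rw [h1, h2]; ring
  have hdege : ∀ e : G.edgeSet,
      (Gpmp G).degree (Sum.inr e) = G.edgeFinset.card + 3 - 2 * r := by
    rintro ⟨s, hs⟩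
    induction s using Sym2.ind with
    | _ a b =>
    have hab : G.Adj a b := G.mem_edgeSet.mp hs
    have hne : a ≠ b := hab.ne
    rw [hsplit]
    have h1 : Fintype.card {v : V // v ∈ s(a, b)} = 2 := by
      rw [Fintype.card_subtype]
      have : (univ.filter (· ∈ s(a, b))) = {a, b} := by
        ext x; simp [Sym2.mem_iff]
      rw [this, card_insert_of_notMem (by simp [hne]), card_singleton]
    have h2 : Fintype.card {f : G.edgeSet // coshareRel s(a, b) f.1} =
        (G.edgeFinset.filter (fun t => coshareRel s(a, b) t)).card := by
      rw [Fintype.card_congr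
        (Equiv.subtypeSubtypeEquivSubtypeInter (· ∈ G.edgeSet) (coshareRel s(a, b) ·)),
        Fintype.card_subtype]
      congr 1
      ext t
      simp [SimpleGraph.mem_edgeFinset, and_comm]
    set A := G.edgeFinset.filter (fun t => a ∈ t) with hA
    set B := G.edgeFinset.filter (fun t => b ∈ t) with hB
    have hAcard : A.card = r := by
      rw [hA, ← SimpleGraph.incidenceFinset_eq_filter,
        SimpleGraph.card_incidenceFinset_eq_degree, hreg a]
    have hBcard : B.card = r := by
      rw [hB, ← SimpleGraph.incidenceFinset_eq_filter,
        SimpleGraph.card_incidenceFinset_eq_degree, hreg b]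
    have hmemA : s(a, b) ∈ A := by
      rw [hA, mem_filter]
      exact ⟨SimpleGraph.mem_edgeFinset.mpr hs, Sym2.mem_mk_left a b⟩
    have hr1 : 1 ≤ r := by
      rw [← hAcard]
      exact card_pos.mpr ⟨_, hmemA⟩
    have hinter : A ∩ B = {s(a, b)} := by
      ext t
      simp only [mem_inter, hA, hB, mem_filter, mem_singleton]
      constructor
      · rintro ⟨⟨ht, ha⟩, _, hb⟩
        exact ((Sym2.mem_and_mem_iff hne).mp ⟨ha, hb⟩).symm ▸ rfl
      · rintro rfl
        exact ⟨⟨SimpleGraph.mem_edgeFinset.mpr hs, Sym2.mem_mk_left a b⟩,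
          SimpleGraph.mem_edgeFinset.mpr hs, Sym2.mem_mk_right a b⟩
    have hunion : (A ∪ B).card + 1 = r + r := by
      have h := card_union_add_card_inter A B
      rw [hinter, card_singleton, hAcard, hBcard] at h
      exact h
    have hsub : A ∪ B ⊆ G.edgeFinset :=
      union_subset (filter_subset _ _) (filter_subset _ _)
    have hle : (A ∪ B).card ≤ G.edgeFinset.card := card_le_card hsub
    have hfilter : G.edgeFinset.filter (fun t => coshareRel s(a, b) t)
        = G.edgeFinset \ (A ∪ B) := by
      ext t
      simp only [mem_filter, mem_sdiff, mem_union, hA, hB]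
      constructor
      · rintro ⟨ht, _, hd⟩
        refine ⟨ht, ?_⟩
        rintro (⟨_, h⟩ | ⟨_, h⟩)
        · exact hd a (Sym2.mem_mk_left a b) h
        · exact hd b (Sym2.mem_mk_right a b) h
      · rintro ⟨ht, hn⟩
        have hna : a ∉ t := fun h => hn (Or.inl ⟨ht, h⟩)
        have hnb : b ∉ t := fun h => hn (Or.inr ⟨ht, h⟩)
        refine ⟨ht, fun h => hna (h ▸ Sym2.mem_mk_left a b), fun w hw => ?_⟩
        rcases Sym2.mem_iff.mp hw with rfl | rfl
        · exact hna
        · exact hnb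
    show Fintype.card {v : V // v ∈ s(a, b)} +
        Fintype.card {f : G.edgeSet // coshareRel s(a, b) f.1} = _
    rw [h1, h2, hfilter, card_sdiff_of_subset hsub]
    omega
  rw [NK, Fintype.prod_sum_type]
  simp only [hdegv, hdege]
  rw [prod_const, prod_const, card_univ, card_univ, ← SimpleGraph.edgeFinset_card, mul_pow]
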